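/- Let f : S → R be a function on the commutative semigroup S of monomials in one variable (isomorphic to (N, +)) with f(1) = 1, such that both (f(x^{i+j}))_{i,j≥0} and (f(x^{i+j+1}))_{i,j≥0} are positive semidefinite (as infinite matrices, i.e., every finite principal submatrix is PSD), and (β f(x^{i+j}) − f(x^{i+j+1}))_{i,j≥0} is positive semidefinite. Then f(x^k) ∈ [0, β^k] for all k ≥ 0. -/

import Mathlib

lemma psd_diag_nonneg {N : ℕ} {M : Matrix (Fin N) (Fin N) ℝ} (hM : M.PosSemidef)
    (i : Fin N) : 0 ≤ M i i := by
  simpa using hM.dotProduct_mulVec_nonneg (Pi.single i 1)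

lemma psd_entry_sq_le {N : ℕ} {M : Matrix (Fin N) (Fin N) ℝ} (hM : M.PosSemidef)
    (i j : Fin N) : (M i j) ^ 2 ≤ M i i * M j j := by
  rcases eq_or_ne i j with rfl | hij
  · nlinarith [psd_diag_nonneg hM i]
  · have hsym : M j i = M i j := by
      have := hM.1.apply i j
      simpa using this
    have key : ∀ t : ℝ, 0 ≤ M i i * (t * t) + (2 * M i j) * t + M j j := by
      intro t
      have h := hM.dotProduct_mulVec_nonneg (t • (Pi.single i 1 : Fin N → ℝ) + Pi.single j 1)
      simp only [star_trivial, Matrix.mulVec_add, Matrix.mulVec_smul,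
        Matrix.mulVec_single, dotProduct_add, add_dotProduct,
        smul_dotProduct, dotProduct_smul, single_dotProduct,
        smul_eq_mul, Pi.add_apply, Pi.smul_apply, Pi.single_eq_same,
        Pi.single_eq_of_ne hij, Pi.single_eq_of_ne (Ne.symm hij)] at h
      simp only [Matrix.col_apply, MulOpposite.op_one, one_smul, one_mul] at h
      rw [hsym] at h
      nlinarith [h]
    have := discrim_le_zero key
    simp only [discrim] at this
    nlinarith

/-- In the one-dimensional case (payoff semigroup of monomials, identified with
`(ℕ, +)` via `k ↦ x^k`), the positivity conditions (i)–(iii) of the main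
theorem force the candidate moments `f(x^k)` to lie in `[0, β^k]`. -/
theorem moments_bounded_of_positivity (β : ℝ) (f : ℕ → ℝ) (hf0 : f 0 = 1)
    (h1 : ∀ N : ℕ, (Matrix.of fun i j : Fin N => f ((i : ℕ) + (j : ℕ))).PosSemidef)
    (h2 : ∀ N : ℕ, (Matrix.of fun i j : Fin N => f ((i : ℕ) + (j : ℕ) + 1)).PosSemidef)
    (h3 : ∀ N : ℕ, (Matrix.of fun i j : Fin N =>
      β * f ((i : ℕ) + (j : ℕ)) - f ((i : ℕ) + (j : ℕ) + 1)).PosSemidef) :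
    ∀ k : ℕ, 0 ≤ f k ∧ f k ≤ β ^ k := by
  have hA : ∀ k, 0 ≤ f k := by
    intro k
    rcases Nat.even_or_odd k with ⟨m, hm⟩ | ⟨m, hm⟩
    · subst hm
      simpa [Matrix.of_apply] using psd_diag_nonneg (h1 (m+1)) ⟨m, by omega⟩
    · subst hm
      have := psd_diag_nonneg (h2 (m+1)) ⟨m, by omega⟩
      simp only [Matrix.of_apply] at this
      have e : m + m + 1 = 2*m+1 := by ring
      rwa [e] at this
  have hB : ∀ m, f (2*m+1) ≤ β * f (2*m) := by
    intro m
    have := psd_diag_nonneg (h3 (m+1)) ⟨m, by omega⟩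
    simp only [Matrix.of_apply] at this
    have e : m + m = 2*m := by ring
    rw [e] at this
    linarith
  have hβ : 0 ≤ β := by
    have h := hB 0
    have h1' := hA 1
    simp [hf0] at h
    linarith
  have hC : ∀ m, f (2*m+2)^2 ≤ f (2*m+1) * f (2*m+3) := by
    intro m
    have := psd_entry_sq_le (h2 (m+2)) ⟨m, by omega⟩ ⟨m+1, by omega⟩
    simp only [Matrix.of_apply] at this
    have e1 : m + (m+1) + 1 = 2*m+2 := by ring
    have e2 : m + m + 1 = 2*m+1 := by ring
    have e3 : (m+1) + (m+1) + 1 = 2*m+3 := by ring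
    rwa [e1, e2, e3] at this
  have hE : ∀ m, f (2*m) ≤ β^(2*m) := by
    intro m
    induction m with
    | zero => simp [hf0]
    | succ n ih =>
      have c := hC n
      have b1 := hB n
      have b2 := hB (n+1)
      have e1 : 2*(n+1) = 2*n+2 := by ring
      have e2 : 2*(n+1)+1 = 2*n+3 := by ring
      rw [e2, e1] at b2
      rw [e1]
      rcases eq_or_lt_of_le (hA (2*n+2)) with h0 | hpos
      · rw [← h0]; positivity
      · have s1 : f (2*n+1) * f (2*n+3) ≤ (β * f (2*n)) * (β * f (2*n+2)) :=
          mul_le_mul b1 b2 (hA _) (mul_nonneg hβ (hA _))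
        have hb : (0:ℝ) ≤ β^(2*n) := pow_nonneg hβ _
        have e3 : β^(2*n+2) = β^2 * β^(2*n) := by ring
        rw [e3]
        nlinarith [hA (2*n), mul_le_mul_of_nonneg_right ih (le_of_lt hpos),
          mul_le_mul_of_nonneg_left (mul_le_mul_of_nonneg_right ih (le_of_lt hpos)) (sq_nonneg β)]
  intro k
  refine ⟨hA k, ?_⟩
  rcases Nat.even_or_odd k with ⟨m, hm⟩ | ⟨m, hm⟩
  · subst hm
    have e : m + m = 2*m := by ring
    rw [e]; exact hE m
  · subst hm
    have := hB m
    have := hE m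
    have e : β^(2*m+1) = β * β^(2*m) := by ring
    rw [e]
    nlinarith [hA (2*m)]
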